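/- Let P ⊂ ℝ^d be a rational d-polytope with normal vectors a_1, …, a_m, and let u, v ∈ ℝ^d. The following are equivalent: (1) (𝒞_P + (u, 0)) ∩ ℤ^{d+1} = (𝒞_P + (v, 0)) ∩ ℤ^{d+1}; (2) ⌈⟨a_i, u⟩⌉ = ⌈⟨a_i, v⟩⌉ for all i = 1, …, m. -/

import Mathlib

open Set Pointwise

noncomputable section

/-- The lattice `ℤ^d` inside `ℝ^d`. -/
def latticePts (d : ℕ) : Set (Fin d → ℝ) := {x | ∀ i, ∃ n : ℤ, x i = (n : ℝ)}

/-- A point of `ℝ^d` with all coordinates rational. -/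
def IsRationalPoint {d : ℕ} (x : Fin d → ℝ) : Prop := ∀ i, ∃ q : ℚ, x i = (q : ℝ)

/-- A rational `d`-polytope in `ℝ^d`: the convex hull of finitely many rational points
whose affine span is all of `ℝ^d`. -/
def IsRationalDPolytope {d : ℕ} (P : Set (Fin d → ℝ)) : Prop :=
  ∃ V : Finset (Fin d → ℝ), (∀ x ∈ V, IsRationalPoint x) ∧
    P = convexHull ℝ (V : Set (Fin d → ℝ)) ∧ affineSpan ℝ P = ⊤

/-- The cone over a polytope `P ⊂ ℝ^d`: `𝒞_P = {s(x, 1) : s ≥ 0, x ∈ P} ⊂ ℝ^{d+1}`. -/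
def coneOver {d : ℕ} (P : Set (Fin d → ℝ)) : Set (Fin (d + 1) → ℝ) :=
  {y | ∃ s : ℝ, 0 ≤ s ∧ ∃ x ∈ P, y = s • (Fin.snoc x 1 : Fin (d + 1) → ℝ)}

namespace Stmt8Aux

/-- Bezout for finsets over ℤ. -/
lemma finset_bezout {ι : Type*} [DecidableEq ι] (s : Finset ι) (f : ι → ℤ) :
    ∃ c : ι → ℤ, ∑ x ∈ s, c x * f x = s.gcd f := by
  induction s using Finset.induction_on with
  | empty => exact ⟨0, by simp⟩
  | insert a s ha ih =>
    obtain ⟨c, hc⟩ := ih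
    obtain ⟨x, y, hxy⟩ := exists_gcd_eq_mul_add_mul (f a) (s.gcd f)
    refine ⟨fun i => if i = a then x else y * c i, ?_⟩
    rw [Finset.gcd_insert, hxy, Finset.sum_insert ha]
    simp only [if_pos rfl]
    rw [← hc, Finset.sum_mul]
    congr 1
    · simp [mul_comm]
    · exact Finset.sum_congr rfl fun i hi => by
        simp only [if_neg (show ¬ i = a from fun h => ha (h ▸ hi))]; ring

def F {d : ℕ} (c : Fin d → ℤ) (x : Fin d → ℝ) : ℝ := ∑ j, (c j : ℝ) * x j

lemma F_int {d : ℕ} (c : Fin d → ℤ) (z : Fin d → ℤ) :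
    F c (fun j => (z j : ℝ)) = ((∑ j, c j * z j : ℤ) : ℝ) := by
  simp [F]


lemma F_add {d : ℕ} (c : Fin d → ℤ) (x y : Fin d → ℝ) : F c (x + y) = F c x + F c y := by
  simp [F, mul_add, Finset.sum_add_distrib]

lemma F_smul {d : ℕ} (c : Fin d → ℤ) (s : ℝ) (x : Fin d → ℝ) : F c (s • x) = s * F c x := by
  simp [F, Finset.mul_sum]; exact Finset.sum_congr rfl fun j _ => by ring

lemma F_sub {d : ℕ} (c : Fin d → ℤ) (x y : Fin d → ℝ) : F c (x - y) = F c x - F c y := by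
  simp [F, mul_sub, Finset.sum_sub_distrib]

lemma F_single {d : ℕ} (c : Fin d → ℤ) (j₀ : Fin d) (t : ℝ) :
    F c (t • (Pi.single j₀ (1 : ℝ) : Fin d → ℝ)) = t * (c j₀ : ℝ) := by
  rw [F_smul]
  simp [F, Pi.single_apply, Finset.sum_ite_eq']

lemma F_cont {d : ℕ} (c : Fin d → ℤ) : Continuous (F c) :=
  continuous_finset_sum _ fun j _ => (continuous_const.mul (continuous_apply j))

lemma P_nonempty {d : ℕ} {P : Set (Fin d → ℝ)} (hP : IsRationalDPolytope P) : P.Nonempty := by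
  obtain ⟨V, -, -, htop⟩ := hP
  have : (affineSpan ℝ P : Set (Fin d → ℝ)).Nonempty := by
    rw [htop]; exact ⟨0, trivial⟩
  exact (affineSpan_nonempty (k := ℝ)).mp this

lemma P_bounded {d : ℕ} {P : Set (Fin d → ℝ)} (hP : IsRationalDPolytope P) :
    ∃ C : ℝ, ∀ x ∈ P, ‖x‖ ≤ C := by
  obtain ⟨V, -, hconv, -⟩ := hP
  have hcpt : IsCompact P := by
    rw [hconv]; exact V.finite_toSet.isCompact_convexHull ℝ
  exact hcpt.isBounded.exists_norm_le

lemma recession {d m : ℕ} {P : Set (Fin d → ℝ)} {a : Fin m → Fin d → ℤ} {b : Fin m → ℤ}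
    (hpres : P = ⋂ i, {x : Fin d → ℝ | (b i : ℝ) ≤ F (a i) x})
    (hne : P.Nonempty) (hbdd : ∃ C : ℝ, ∀ x ∈ P, ‖x‖ ≤ C)
    {w : Fin d → ℝ} (hw : ∀ i, F (a i) w ≤ 0) : w = 0 := by
  by_contra hw0
  have hnw : 0 < ‖w‖ := norm_pos_iff.mpr hw0
  obtain ⟨x₀, hx₀⟩ := hne
  obtain ⟨C, hC⟩ := hbdd
  set t : ℝ := (C + ‖x₀‖ + 1) / ‖w‖ with ht
  have htpos : 0 ≤ t := by
    apply div_nonneg _ hnw.le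
    have := norm_nonneg x₀
    have := (hC x₀ hx₀).trans_lt (lt_of_le_of_lt (le_refl _) (by linarith : C < C + 1))
    nlinarith [norm_nonneg x₀, hC x₀ hx₀]
  have hmem : x₀ - t • w ∈ P := by
    rw [hpres]
    refine Set.mem_iInter.mpr fun i => ?_
    have hx : (b i : ℝ) ≤ F (a i) x₀ := by
      rw [hpres] at hx₀; exact Set.mem_iInter.mp hx₀ i
    have : F (a i) (x₀ - t • w) = F (a i) x₀ - t * F (a i) w := by
      rw [F_sub, F_smul]
    rw [Set.mem_setOf_eq, this]
    nlinarith [hw i]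
  have h1 : ‖x₀ - t • w‖ ≤ C := hC _ hmem
  have h2 : t * ‖w‖ - ‖x₀‖ ≤ ‖x₀ - t • w‖ := by
    have := norm_sub_norm_le (x₀ - t • w) x₀
    have h3 : ‖x₀ - t • w - x₀‖ = t * ‖w‖ := by
      rw [sub_sub_cancel_left, norm_neg, norm_smul, Real.norm_of_nonneg htpos]
    have h4 := norm_sub_norm_le (t • w) x₀
    calc t * ‖w‖ - ‖x₀‖ = ‖t • w‖ - ‖x₀‖ := by
          rw [norm_smul, Real.norm_of_nonneg htpos]
      _ ≤ ‖t • w - x₀‖ := norm_sub_norm_le _ _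
      _ = ‖x₀ - t • w‖ := by rw [← norm_neg]; congr 1; abel
  have h5 : t * ‖w‖ = C + ‖x₀‖ + 1 := by
    rw [ht, div_mul_cancel₀ _ hnw.ne']
  linarith


lemma mem_T {d : ℕ} {P : Set (Fin d → ℝ)} (hne : P.Nonempty)
    (u : Fin d → ℝ) (y : Fin (d + 1) → ℝ) :
    y ∈ (fun y => y + (Fin.snoc u 0 : Fin (d + 1) → ℝ)) '' coneOver P ↔
      (0 ≤ y (Fin.last d) ∧
        ((y (Fin.last d) = 0 ∧ ∀ j, y j.castSucc = u j) ∨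
         (0 < y (Fin.last d) ∧ (fun j => (y j.castSucc - u j) / y (Fin.last d)) ∈ P))) := by
  constructor
  · rintro ⟨w, ⟨s, hs, x, hx, rfl⟩, rfl⟩
    dsimp only
    have hlast : (s • (Fin.snoc x 1 : Fin (d + 1) → ℝ) + (Fin.snoc u 0 : Fin (d + 1) → ℝ)) (Fin.last d) = s := by
      simp [Fin.snoc_last]
    have hcs : ∀ j : Fin d, (s • (Fin.snoc x 1 : Fin (d + 1) → ℝ) + (Fin.snoc u 0 : Fin (d + 1) → ℝ)) j.castSucc
        = s * x j + u j := by
      intro j; simp [Fin.snoc_castSucc]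
    rw [hlast]
    refine ⟨hs, ?_⟩
    rcases eq_or_lt_of_le hs with h0 | h0
    · left
      exact ⟨h0.symm, fun j => by rw [hcs j, ← h0]; ring⟩
    · right
      refine ⟨h0, ?_⟩
      have : (fun j => ((s • (Fin.snoc x 1 : Fin (d + 1) → ℝ) + (Fin.snoc u 0 : Fin (d + 1) → ℝ)) j.castSucc - u j) / s)
          = x := by
        funext j; rw [hcs j]; field_simp; ring
      rw [this]; exact hx
  · rintro ⟨hpos, h0 | hpos'⟩
    · obtain ⟨x, hx⟩ := hne
      refine ⟨0, ⟨0, le_refl 0, x, hx, by simp⟩, ?_⟩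
      funext k
      simp only [Pi.add_apply, Pi.zero_apply, zero_add]
      refine Fin.lastCases ?_ (fun j => ?_) k
      · rw [Fin.snoc_last, h0.1]
      · rw [Fin.snoc_castSucc, h0.2 j]
    · obtain ⟨hn, hmem⟩ := hpos'
      refine ⟨y (Fin.last d) • (Fin.snoc (fun j => (y j.castSucc - u j) / y (Fin.last d)) 1 :
          Fin (d + 1) → ℝ), ⟨y (Fin.last d), hn.le, _, hmem, rfl⟩, ?_⟩
      funext k
      simp only [Pi.add_apply, Pi.smul_apply, smul_eq_mul]
      refine Fin.lastCases ?_ (fun j => ?_) k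
      · rw [Fin.snoc_last, Fin.snoc_last]; ring
      · rw [Fin.snoc_castSucc, Fin.snoc_castSucc]; field_simp; ring


lemma ceil_trick (r : ℝ) (K M : ℤ) : (M : ℝ) + r ≤ K ↔ (M : ℝ) + (⌈r⌉ : ℝ) ≤ K := by
  constructor
  · intro h
    have h1 : r ≤ ((K - M : ℤ) : ℝ) := by push_cast; linarith
    have h2 : ⌈r⌉ ≤ K - M := Int.ceil_le.mpr h1
    have h3 : (⌈r⌉ : ℝ) ≤ ((K - M : ℤ) : ℝ) := Int.cast_le.mpr h2
    push_cast at h3; linarith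
  · intro h
    linarith [Int.le_ceil r]

lemma mem_T_int {d m : ℕ} {P : Set (Fin d → ℝ)} {a : Fin m → Fin d → ℤ} {b : Fin m → ℤ}
    (hpres : P = ⋂ i, {x : Fin d → ℝ | (b i : ℝ) ≤ F (a i) x}) (hne : P.Nonempty)
    (u : Fin d → ℝ) (y : Fin (d + 1) → ℝ) (hy : y ∈ latticePts (d + 1)) :
    y ∈ (fun y => y + (Fin.snoc u 0 : Fin (d + 1) → ℝ)) '' coneOver P ↔
      0 ≤ y (Fin.last d) ∧
        ((y (Fin.last d) = 0 ∧ ∀ j, y j.castSucc = u j) ∨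
         (0 < y (Fin.last d) ∧ ∀ i, y (Fin.last d) * (b i : ℝ) + (⌈F (a i) u⌉ : ℝ)
            ≤ F (a i) (fun j => y j.castSucc))) := by
  rw [mem_T hne]
  refine and_congr_right fun _ => or_congr Iff.rfl (and_congr_right fun hn => ?_)
  obtain ⟨N, hN⟩ := hy (Fin.last d)
  have hNpos : 0 < N := by exact_mod_cast hN ▸ hn
  choose Z hZ using fun j : Fin d => hy j.castSucc
  have hzZ : (fun j => y j.castSucc) = fun j => ((Z j : ℤ) : ℝ) := funext hZ
  rw [hpres, Set.mem_iInter]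
  refine forall_congr' fun i => ?_
  rw [Set.mem_setOf_eq]
  have heq : (fun j => (y j.castSucc - u j) / y (Fin.last d))
      = (y (Fin.last d))⁻¹ • ((fun j => y j.castSucc) - u) := by
    funext j; simp [div_eq_inv_mul]
  rw [heq, F_smul, F_sub]
  have h1 : (b i : ℝ) ≤ (y (Fin.last d))⁻¹ * (F (a i) (fun j => y j.castSucc) - F (a i) u)
      ↔ y (Fin.last d) * (b i : ℝ) + F (a i) u ≤ F (a i) (fun j => y j.castSucc) := by
    rw [inv_mul_eq_div, le_div_iff₀ hn]
    constructor <;> intro h <;> nlinarith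
  rw [h1, hzZ, F_int, hN]
  have : ((N : ℝ)) * (b i : ℝ) = ((N * b i : ℤ) : ℝ) := by push_cast; ring
  rw [this]
  exact ceil_trick _ _ _


lemma a_ne {d m : ℕ} {P : Set (Fin d → ℝ)} {a : Fin m → Fin d → ℤ} {b : Fin m → ℤ}
    (hpres : P = ⋂ i, {x : Fin d → ℝ | (b i : ℝ) ≤ F (a i) x}) (hne : P.Nonempty)
    (hprim : ∀ i, Finset.univ.gcd (Fin.cons (b i) (a i)) = 1)
    (hirr : ∀ i : Fin m,
      (⋂ j ∈ Finset.univ.erase i, {x : Fin d → ℝ | (b j : ℝ) ≤ F (a j) x}) ≠ P)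
    (i : Fin m) : ∃ j, a i j ≠ 0 := by
  by_contra h
  push_neg at h
  have hd2 : b i ∣ Finset.univ.gcd (Fin.cons (b i) (a i)) := by
    refine Finset.dvd_gcd fun k _ => ?_
    refine Fin.cases ?_ (fun j => ?_) k
    · rw [Fin.cons_zero]
    · rw [Fin.cons_succ, h j]; exact dvd_zero _
  rw [hprim i] at hd2
  have hF0 : ∀ x : Fin d → ℝ, F (a i) x = 0 := fun x => by simp [F, h]
  rcases Int.isUnit_iff.mp (isUnit_of_dvd_one hd2) with hb | hb
  · obtain ⟨x₀, hx₀⟩ := hne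
    rw [hpres] at hx₀
    have := Set.mem_iInter.mp hx₀ i
    rw [Set.mem_setOf_eq, hF0, hb] at this
    norm_num at this
  · apply hirr i
    apply Set.Subset.antisymm
    · intro x hx
      rw [hpres]
      refine Set.mem_iInter.mpr fun j => ?_
      by_cases hj : j = i
      · subst hj
        rw [Set.mem_setOf_eq, hF0, hb]
        norm_num
      · exact Set.mem_iInter₂.mp hx j (Finset.mem_erase.mpr ⟨hj, Finset.mem_univ j⟩)
    · intro x hx
      refine Set.mem_iInter₂.mpr fun j _ => ?_
      rw [hpres] at hx
      exact Set.mem_iInter.mp hx j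

lemma strict_pt {d m : ℕ} {P : Set (Fin d → ℝ)} {a : Fin m → Fin d → ℤ} {b : Fin m → ℤ}
    (hP : IsRationalDPolytope P)
    (hpres : P = ⋂ i, {x : Fin d → ℝ | (b i : ℝ) ≤ F (a i) x})
    (hane : ∀ i, ∃ j, a i j ≠ 0) :
    ∃ q : Fin d → ℝ, ∀ i, (b i : ℝ) < F (a i) q := by
  obtain ⟨V, -, hconv, htop⟩ := hP
  have hconvex : Convex ℝ P := hconv ▸ convex_convexHull ℝ _
  have hint : (interior P).Nonempty :=
    (Convex.interior_nonempty_iff_affineSpan_eq_top hconvex).mpr htop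
  obtain ⟨q, hq⟩ := hint
  refine ⟨q, fun i => ?_⟩
  obtain ⟨ε, hε, hball⟩ := Metric.isOpen_iff.mp isOpen_interior q hq
  set w : Fin d → ℝ := fun j => (a i j : ℝ) with hw
  obtain ⟨j₀, hj₀⟩ := hane i
  have hwne : w ≠ 0 := by
    intro hcon
    have := congrFun hcon j₀
    simp only [hw, Pi.zero_apply] at this
    exact hj₀ (by exact_mod_cast this)
  have hnw : 0 < ‖w‖ := norm_pos_iff.mpr hwne
  have hS : 0 < F (a i) w := by
    refine Finset.sum_pos' (fun j _ => mul_self_nonneg ((a i j : ℝ))) ⟨j₀, Finset.mem_univ j₀, ?_⟩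
    have h0 : (a i j₀ : ℝ) ≠ 0 := by exact_mod_cast hj₀
    exact mul_self_pos.mpr h0
  set t : ℝ := ε / (2 * ‖w‖) with htdef
  have ht : 0 < t := div_pos hε (mul_pos two_pos hnw)
  have htw : t * ‖w‖ = ε / 2 := by
    rw [htdef]; field_simp
  have hp : q - t • w ∈ P := by
    apply interior_subset
    apply hball
    rw [Metric.mem_ball, dist_eq_norm]
    have heq : q - t • w - q = -(t • w) := by abel
    rw [heq, norm_neg, norm_smul, Real.norm_of_nonneg ht.le, htw]
    linarith
  rw [hpres] at hp
  have := Set.mem_iInter.mp hp i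
  rw [Set.mem_setOf_eq, F_sub, F_smul] at this
  nlinarith


lemma facet_pt {d m : ℕ} {P : Set (Fin d → ℝ)} {a : Fin m → Fin d → ℤ} {b : Fin m → ℤ}
    (hpres : P = ⋂ i, {x : Fin d → ℝ | (b i : ℝ) ≤ F (a i) x})
    (hqex : ∃ q : Fin d → ℝ, ∀ i, (b i : ℝ) < F (a i) q)
    (hirr : ∀ i : Fin m,
      (⋂ j ∈ Finset.univ.erase i, {x : Fin d → ℝ | (b j : ℝ) ≤ F (a j) x}) ≠ P)
    (hane : ∀ i, ∃ j, a i j ≠ 0) (i : Fin m) :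
    ∃ p : Fin d → ℚ, F (a i) (fun l => (p l : ℝ)) = (b i : ℝ) ∧
      ∀ j, j ≠ i → (b j : ℝ) < F (a j) (fun l => (p l : ℝ)) := by
  obtain ⟨q, hq⟩ := hqex
  -- a point outside P satisfying all constraints except i
  have hsub : P ⊆ ⋂ j ∈ Finset.univ.erase i, {x : Fin d → ℝ | (b j : ℝ) ≤ F (a j) x} := by
    intro x hx
    refine Set.mem_iInter₂.mpr fun j _ => ?_
    rw [hpres] at hx
    exact Set.mem_iInter.mp hx j
  obtain ⟨xo, hxo, hxoP⟩ := Set.exists_of_ssubset (hsub.ssubset_of_ne (hirr i).symm)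
  have hout1 : ∀ j, j ≠ i → (b j : ℝ) ≤ F (a j) xo := fun j hj =>
    Set.mem_iInter₂.mp hxo j (Finset.mem_erase.mpr ⟨hj, Finset.mem_univ j⟩)
  have hout2 : F (a i) xo < (b i : ℝ) := by
    by_contra hcon
    push_neg at hcon
    apply hxoP
    rw [hpres]
    refine Set.mem_iInter.mpr fun j => ?_
    by_cases hj : j = i
    · subst hj; exact hcon
    · exact hout1 j hj
  -- crossing point on the hyperplane
  have hden : 0 < F (a i) q - F (a i) xo := by linarith [hq i]
  set t : ℝ := (F (a i) q - (b i : ℝ)) / (F (a i) q - F (a i) xo) with htdef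
  have ht0 : 0 < t := div_pos (by linarith [hq i]) hden
  have ht1 : t < 1 := (div_lt_one hden).mpr (by linarith)
  set xs : Fin d → ℝ := q + t • (xo - q) with hxsdef
  have hFxs : ∀ c : Fin m → Fin d → ℤ, ∀ j, F (c j) xs = F (c j) q + t * (F (c j) xo - F (c j) q) := by
    intro c j; rw [hxsdef, F_add, F_smul, F_sub]
  have hxsi : F (a i) xs = (b i : ℝ) := by
    rw [hFxs a i, htdef]
    field_simp
    ring
  have hxsj : ∀ j, j ≠ i → (b j : ℝ) < F (a j) xs := by
    intro j hj
    rw [hFxs a j]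
    nlinarith [hq j, hout1 j hj]
  -- the projection map onto the hyperplane
  obtain ⟨j₀, hj₀⟩ := hane i
  have hj₀R : ((a i j₀ : ℝ)) ≠ 0 := by exact_mod_cast hj₀
  set g : (Fin d → ℝ) → (Fin d → ℝ) :=
    fun x => x + (((b i : ℝ) - F (a i) x) / (a i j₀)) • (Pi.single j₀ (1:ℝ) : Fin d → ℝ) with hgdef
  have hgF : ∀ (c : Fin d → ℤ) (x : Fin d → ℝ),
      F c (g x) = F c x + ((b i : ℝ) - F (a i) x) / (a i j₀) * (c j₀ : ℝ) := by
    intro c x; rw [hgdef]; rw [F_add, F_single]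
  have hgi : ∀ x, F (a i) (g x) = (b i : ℝ) := by
    intro x; rw [hgF]; field_simp; ring
  have hgxs : g xs = xs := by
    rw [hgdef]
    simp [hxsi]
  have hgcont : Continuous g := by
    rw [hgdef]
    exact continuous_id.add ((((continuous_const.sub (F_cont (a i))).div_const _)).smul
      continuous_const)
  -- open set of good points
  set U : Set (Fin d → ℝ) := ⋂ j ∈ Finset.univ.erase i, {x | (b j : ℝ) < F (a j) (g x)} with hUdef
  have hUopen : IsOpen U := by
    rw [hUdef]
    exact isOpen_biInter_finset fun j _ =>
      isOpen_lt continuous_const ((F_cont (a j)).comp hgcont)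
  have hxsU : xs ∈ U := by
    rw [hUdef]
    refine Set.mem_iInter₂.mpr fun j hj => ?_
    rw [Set.mem_setOf_eq, hgxs]
    exact hxsj j (Finset.mem_erase.mp hj).1
  obtain ⟨ε, hε, hball⟩ := Metric.isOpen_iff.mp hUopen xs hxsU
  -- rational approximation
  choose r hr using fun l => exists_rat_near (xs l) (half_pos hε)
  set rv : Fin d → ℝ := fun l => ((r l : ℚ) : ℝ) with hrvdef
  have hrvU : rv ∈ U := by
    apply hball
    rw [Metric.mem_ball]
    rw [dist_pi_lt_iff hε]
    intro l
    rw [Real.dist_eq]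
    have := hr l
    rw [abs_sub_comm] at this
    linarith
  -- the rational point
  set Fq : ℚ := ∑ l, (a i l : ℚ) * r l with hFqdef
  have hFqcast : (Fq : ℝ) = F (a i) rv := by
    rw [hFqdef, hrvdef]
    push_cast [F]
    rfl
  refine ⟨fun l => if l = j₀ then r j₀ + ((b i : ℚ) - Fq) / (a i j₀) else r l, ?_, ?_⟩
  · have hpe : (fun l => ((if l = j₀ then r j₀ + ((b i : ℚ) - Fq) / (a i j₀) else r l : ℚ) : ℝ))
        = g rv := by
      funext l
      rw [hgdef]
      simp only [Pi.add_apply, Pi.smul_apply, smul_eq_mul, Pi.single_apply]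
      by_cases hl : l = j₀
      · subst hl
        rw [if_pos rfl, if_pos rfl, mul_one, ← hFqcast]
        have hc : rv l = ((r l : ℚ) : ℝ) := rfl
        rw [hc]
        push_cast
        rfl
      · rw [if_neg hl, if_neg hl, mul_zero, add_zero]
    rw [hpe, hgi]
  · intro j hj
    have hpe : (fun l => ((if l = j₀ then r j₀ + ((b i : ℚ) - Fq) / (a i j₀) else r l : ℚ) : ℝ))
        = g rv := by
      funext l
      rw [hgdef]
      simp only [Pi.add_apply, Pi.smul_apply, smul_eq_mul, Pi.single_apply]
      by_cases hl : l = j₀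
      · subst hl
        rw [if_pos rfl, if_pos rfl, mul_one, ← hFqcast]
        have hc : rv l = ((r l : ℚ) : ℝ) := rfl
        rw [hc]
        push_cast
        rfl
      · rw [if_neg hl, if_neg hl, mul_zero, add_zero]
    rw [hpe]
    exact Set.mem_iInter₂.mp (hUdef ▸ hrvU) j (Finset.mem_erase.mpr ⟨hj, Finset.mem_univ j⟩)


lemma sep {d m : ℕ} {P : Set (Fin d → ℝ)} {a : Fin m → Fin d → ℤ} {b : Fin m → ℤ}
    (hP : IsRationalDPolytope P)
    (hpres : P = ⋂ i, {x : Fin d → ℝ | (b i : ℝ) ≤ F (a i) x})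
    (hprim : ∀ i, Finset.univ.gcd (Fin.cons (b i) (a i)) = 1)
    (hirr : ∀ i : Fin m,
      (⋂ j ∈ Finset.univ.erase i, {x : Fin d → ℝ | (b j : ℝ) ≤ F (a j) x}) ≠ P)
    (u v : Fin d → ℝ) (i : Fin m) (hlt : ⌈F (a i) u⌉ < ⌈F (a i) v⌉) :
    ∃ y : Fin (d + 1) → ℝ, y ∈ latticePts (d + 1) ∧
      y ∈ (fun y => y + (Fin.snoc u 0 : Fin (d + 1) → ℝ)) '' coneOver P ∧
      y ∉ (fun y => y + (Fin.snoc v 0 : Fin (d + 1) → ℝ)) '' coneOver P := by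
  have hne := P_nonempty hP
  have hane := a_ne hpres hne hprim hirr
  obtain ⟨p, hp1, hp2⟩ := facet_pt hpres (strict_pt hP hpres hane) hirr hane i
  -- common denominator
  set D : ℕ := ∏ l, (p l).den with hDdef
  have hDpos : 0 < D := Finset.prod_pos fun l _ => (p l).pos
  set w : Fin d → ℤ := fun l => (p l).num * ((D / (p l).den : ℕ) : ℤ) with hwdef
  have hwQ : ∀ l, ((w l : ℤ) : ℚ) = p l * (D : ℚ) := by
    intro l
    have hdvd : (p l).den ∣ D := Finset.dvd_prod_of_mem _ (Finset.mem_univ l)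
    have h1 : (D : ℚ) = ((p l).den : ℚ) * ((D / (p l).den : ℕ) : ℚ) := by
      rw [← Nat.cast_mul, Nat.mul_div_cancel' hdvd]
    rw [hwdef]
    have h2 : ((((p l).num * ((D / (p l).den : ℕ) : ℤ) : ℤ)) : ℚ)
        = ((p l).num : ℚ) * (((D / (p l).den : ℕ) : ℕ) : ℚ) := by
      rw [Int.cast_mul, Int.cast_natCast]
    rw [h2, h1, ← mul_assoc, Rat.mul_den_eq_num]
  have hwR : ∀ l, ((w l : ℤ) : ℝ) = (p l : ℝ) * (D : ℝ) := by
    intro l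
    have := hwQ l
    have h2 : (((w l : ℤ) : ℚ) : ℝ) = ((p l * (D : ℚ) : ℚ) : ℝ) := by rw [this]
    push_cast at h2
    exact_mod_cast h2
  have hwcast : (fun l => ((w l : ℤ) : ℝ)) = fun l => (p l : ℝ) * (D : ℝ) := funext hwR
  -- integer values of constraints on w
  have hFw : ∀ j : Fin m, F (a j) (fun l => ((w l : ℤ) : ℝ))
      = (D : ℝ) * F (a j) (fun l => (p l : ℝ)) := by
    intro j
    rw [hwcast]
    simp only [F, Finset.mul_sum]
    exact Finset.sum_congr rfl fun l _ => by ring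
  have hei : (∑ l, a i l * w l : ℤ) = (D : ℤ) * b i := by
    have h1 : ((∑ l, a i l * w l : ℤ) : ℝ) = (((D : ℤ) * b i : ℤ) : ℝ) := by
      rw [← F_int, hFw i, hp1]
      push_cast
      ring
    exact_mod_cast h1
  have hej : ∀ j, j ≠ i → (D : ℤ) * b j + 1 ≤ (∑ l, a j l * w l : ℤ) := by
    intro j hj
    have h1 : (((D : ℤ) * b j : ℤ) : ℝ) < ((∑ l, a j l * w l : ℤ) : ℝ) := by
      rw [← F_int, hFw j]
      push_cast
      nlinarith [hp2 j hj, (by exact_mod_cast hDpos : (0:ℝ) < (D:ℝ))]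
    exact Int.add_one_le_iff.mpr (by exact_mod_cast h1)
  -- Bezout
  obtain ⟨c, hc⟩ := finset_bezout Finset.univ (Fin.cons (b i) (a i))
  rw [hprim i] at hc
  rw [Fin.sum_univ_succ] at hc
  simp only [Fin.cons_zero, Fin.cons_succ] at hc
  set C : ℤ := ⌈F (a i) u⌉ with hCdef
  set z₀ : Fin d → ℤ := fun j => C * c (j.succ) with hz₀def
  set n₀ : ℤ := -(C * c 0) with hn₀def
  have hbase_i : (∑ l, a i l * z₀ l : ℤ) - n₀ * b i = C := by
    have h1 : (∑ l, a i l * z₀ l : ℤ) = C * ∑ l, c (l.succ) * a i l := by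
      rw [Finset.mul_sum]
      exact Finset.sum_congr rfl fun l _ => by rw [hz₀def]; ring
    rw [h1, hn₀def]
    have h2 : (∑ l : Fin d, c l.succ * a i l : ℤ) = 1 - c 0 * b i := by linarith
    rw [h2]; ring
  -- choose k large
  set base : Fin m → ℤ := fun j => (∑ l, a j l * z₀ l : ℤ) - n₀ * b j with hbasedef
  set k : ℤ := max (1 - n₀) 0 + ∑ j, max (⌈F (a j) u⌉ - base j) 0 with hkdef
  have hsumnn : (0:ℤ) ≤ ∑ j, max (⌈F (a j) u⌉ - base j) 0 :=
    Finset.sum_nonneg fun j _ => le_max_right _ _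
  have hk0 : 0 ≤ k := by
    rw [hkdef]; have := le_max_right (1 - n₀) 0; linarith
  have hk1 : 1 - n₀ ≤ k := by
    rw [hkdef]; have := le_max_left (1 - n₀) 0; linarith
  have hk2 : ∀ j, ⌈F (a j) u⌉ - base j ≤ k := by
    intro j
    have h1 : max (⌈F (a j) u⌉ - base j) 0 ≤ ∑ j', max (⌈F (a j') u⌉ - base j') 0 :=
      Finset.single_le_sum (f := fun j' => max (⌈F (a j') u⌉ - base j') 0)
        (fun j' _ => le_max_right _ _) (Finset.mem_univ j)
    have h2 := le_max_left (⌈F (a j) u⌉ - base j) 0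
    have h3 := le_max_right (1 - n₀) 0
    rw [hkdef]; linarith
  set n : ℤ := n₀ + k * D with hndef
  set z : Fin d → ℤ := fun l => z₀ l + k * w l with hzdef
  have hn1 : 1 ≤ n := by
    have hD1 : (1:ℤ) ≤ (D:ℤ) := by exact_mod_cast hDpos
    nlinarith
  have hsplit : ∀ j : Fin m, (∑ l, a j l * z l : ℤ)
      = (∑ l, a j l * z₀ l) + k * (∑ l, a j l * w l) := by
    intro j
    rw [Finset.mul_sum, ← Finset.sum_add_distrib]
    exact Finset.sum_congr rfl fun l _ => by rw [hzdef]; ring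
  have hzi : (∑ l, a i l * z l : ℤ) = n * b i + C := by
    rw [hsplit i, hei, hndef]
    linear_combination hbase_i
  have hzj : ∀ j, n * b j + ⌈F (a j) u⌉ ≤ (∑ l, a j l * z l : ℤ) := by
    intro j
    by_cases hji : j = i
    · subst hji
      rw [hzi]
    · have h1 := hej j hji
      have h2 := hk2 j
      rw [hsplit j, hndef]
      have hbj : (∑ l, a j l * z₀ l : ℤ) = base j + n₀ * b j := by rw [hbasedef]; ring
      rw [hbj]
      nlinarith
  -- the separating point
  refine ⟨Fin.snoc (fun l => ((z l : ℤ) : ℝ)) ((n : ℤ) : ℝ), ?_, ?_, ?_⟩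
  · intro k'
    refine Fin.lastCases ?_ (fun l => ?_) k'
    · exact ⟨n, by rw [Fin.snoc_last]⟩
    · exact ⟨z l, by rw [Fin.snoc_castSucc]⟩
  · rw [mem_T_int hpres hne u _ (fun k' => Fin.lastCases ⟨n, by rw [Fin.snoc_last]⟩
      (fun l => ⟨z l, by rw [Fin.snoc_castSucc]⟩) k')]
    have hlast : (Fin.snoc (fun l => ((z l : ℤ) : ℝ)) ((n : ℤ) : ℝ) : Fin (d+1) → ℝ)
        (Fin.last d) = ((n : ℤ) : ℝ) := Fin.snoc_last _ _
    have hcs : (fun l => (Fin.snoc (fun l' => ((z l' : ℤ) : ℝ)) ((n : ℤ) : ℝ) :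
        Fin (d+1) → ℝ) l.castSucc) = fun l => ((z l : ℤ) : ℝ) := by
      funext l; rw [Fin.snoc_castSucc]
    rw [hlast]
    have hnR : (0:ℝ) < ((n : ℤ) : ℝ) := by exact_mod_cast hn1
    refine ⟨hnR.le, Or.inr ⟨hnR, fun j => ?_⟩⟩
    rw [hcs, F_int]
    have := hzj j
    have hcast : ((n * b j + ⌈F (a j) u⌉ : ℤ) : ℝ) ≤ ((∑ l, a j l * z l : ℤ) : ℝ) := by
      exact_mod_cast this
    push_cast at hcast ⊢
    linarith
  · intro hmem
    rw [mem_T_int hpres hne v _ (fun k' => Fin.lastCases ⟨n, by rw [Fin.snoc_last]⟩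
      (fun l => ⟨z l, by rw [Fin.snoc_castSucc]⟩) k')] at hmem
    have hlast : (Fin.snoc (fun l => ((z l : ℤ) : ℝ)) ((n : ℤ) : ℝ) : Fin (d+1) → ℝ)
        (Fin.last d) = ((n : ℤ) : ℝ) := Fin.snoc_last _ _
    have hcs : (fun l => (Fin.snoc (fun l' => ((z l' : ℤ) : ℝ)) ((n : ℤ) : ℝ) :
        Fin (d+1) → ℝ) l.castSucc) = fun l => ((z l : ℤ) : ℝ) := by
      funext l; rw [Fin.snoc_castSucc]
    rw [hlast] at hmem
    have hnR : (0:ℝ) < ((n : ℤ) : ℝ) := by exact_mod_cast hn1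
    rcases hmem.2 with h0 | ⟨-, hcon⟩
    · exact absurd h0.1 hnR.ne'
    · have := hcon i
      rw [hcs, F_int, hzi] at this
      have hCv : (⌈F (a i) v⌉ : ℝ) ≤ (C : ℝ) := by
        push_cast at this
        linarith
      have : ⌈F (a i) v⌉ ≤ C := by exact_mod_cast hCv
      rw [hCdef] at this
      omega


lemma eq_of_int {d m : ℕ} {P : Set (Fin d → ℝ)} {a : Fin m → Fin d → ℤ} {b : Fin m → ℤ}
    (hP : IsRationalDPolytope P)
    (hpres : P = ⋂ i, {x : Fin d → ℝ | (b i : ℝ) ≤ F (a i) x})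
    {u v : Fin d → ℝ} (hu : ∀ j, ∃ n : ℤ, u j = (n : ℝ))
    (hc : ∀ i, ⌈F (a i) u⌉ = ⌈F (a i) v⌉) : u = v := by
  choose U hU using hu
  have huc : u = fun j => ((U j : ℤ) : ℝ) := funext hU
  have hFu : ∀ i, ⌈F (a i) u⌉ = (⌈F (a i) u⌉ : ℤ) := fun i => rfl
  have hFuint : ∀ i, F (a i) u = ((∑ j, a i j * U j : ℤ) : ℝ) := by
    intro i; rw [huc, F_int]
  have hle : ∀ i, F (a i) (v - u) ≤ 0 := by
    intro i
    rw [F_sub]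
    have h1 : F (a i) v ≤ (⌈F (a i) v⌉ : ℝ) := Int.le_ceil _
    have h2 : ⌈F (a i) v⌉ = ⌈F (a i) u⌉ := (hc i).symm
    have h3 : ⌈F (a i) u⌉ = (∑ j, a i j * U j : ℤ) := by rw [hFuint i, Int.ceil_intCast]
    rw [h2, h3] at h1
    rw [← hFuint i] at h1
    linarith
  have := recession hpres (P_nonempty hP) (P_bounded hP) hle
  have h4 : v - u = 0 := this
  funext j
  have := congrFun h4 j
  simp only [Pi.sub_apply, Pi.zero_apply, sub_eq_zero] at this
  exact this.symm

lemma subset_T {d m : ℕ} {P : Set (Fin d → ℝ)} {a : Fin m → Fin d → ℤ} {b : Fin m → ℤ}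
    (hpres : P = ⋂ i, {x : Fin d → ℝ | (b i : ℝ) ≤ F (a i) x}) (hne : P.Nonempty)
    (u v : Fin d → ℝ) (hc : ∀ i, ⌈F (a i) u⌉ = ⌈F (a i) v⌉)
    (hu : ¬ ∀ j, ∃ n : ℤ, u j = (n : ℝ)) :
    (fun y => y + (Fin.snoc u 0 : Fin (d + 1) → ℝ)) '' coneOver P ∩ latticePts (d + 1) ⊆
    (fun y => y + (Fin.snoc v 0 : Fin (d + 1) → ℝ)) '' coneOver P ∩ latticePts (d + 1) := by
  rintro y ⟨hyT, hyL⟩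
  refine ⟨?_, hyL⟩
  rw [mem_T_int hpres hne u y hyL] at hyT
  rw [mem_T_int hpres hne v y hyL]
  obtain ⟨h0, hcase⟩ := hyT
  refine ⟨h0, ?_⟩
  rcases hcase with ⟨-, hz2⟩ | ⟨hpos, hineq⟩
  · exfalso
    apply hu
    intro j
    obtain ⟨n, hn⟩ := hyL j.castSucc
    exact ⟨n, by rw [← hz2 j, hn]⟩
  · exact Or.inr ⟨hpos, fun i => by rw [← hc i]; exact hineq i⟩

end Stmt8Aux

theorem stmt8 {d m : ℕ} (P : Set (Fin d → ℝ)) (hP : IsRationalDPolytope P)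
    (a : Fin m → Fin d → ℤ) (b : Fin m → ℤ)
    -- the irredundant presentation `P = ⋂ᵢ {x : ⟨aᵢ, x⟩ ≥ bᵢ}` by primitive `(aᵢ, bᵢ)`
    (hpres : P = ⋂ i, {x : Fin d → ℝ | (b i : ℝ) ≤ ∑ j, (a i j : ℝ) * x j})
    (hprim : ∀ i, Finset.univ.gcd (Fin.cons (b i) (a i)) = 1)
    (hirr : ∀ i : Fin m,
      (⋂ j ∈ Finset.univ.erase i, {x : Fin d → ℝ | (b j : ℝ) ≤ ∑ l, (a j l : ℝ) * x l}) ≠ P)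
    (u v : Fin d → ℝ) :
    ((fun y => y + (Fin.snoc u 0 : Fin (d + 1) → ℝ)) '' coneOver P ∩ latticePts (d + 1) =
        (fun y => y + (Fin.snoc v 0 : Fin (d + 1) → ℝ)) '' coneOver P ∩ latticePts (d + 1)) ↔
      ∀ i, ⌈∑ j, (a i j : ℝ) * u j⌉ = ⌈∑ j, (a i j : ℝ) * v j⌉ := by
  have hpres' : P = ⋂ i, {x : Fin d → ℝ | (b i : ℝ) ≤ Stmt8Aux.F (a i) x} := hpres
  have hirr' : ∀ i : Fin m,
      (⋂ j ∈ Finset.univ.erase i, {x : Fin d → ℝ | (b j : ℝ) ≤ Stmt8Aux.F (a j) x}) ≠ P := hirr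
  have hne := Stmt8Aux.P_nonempty hP
  constructor
  · intro h i
    by_contra hceq
    rcases lt_or_gt_of_ne hceq with hlt | hlt
    · obtain ⟨y, hyL, hyu, hyv⟩ := Stmt8Aux.sep hP hpres' hprim hirr' u v i hlt
      have h1 : y ∈ (fun y => y + (Fin.snoc u 0 : Fin (d + 1) → ℝ)) '' coneOver P ∩
          latticePts (d + 1) := ⟨hyu, hyL⟩
      rw [h] at h1
      exact hyv h1.1
    · obtain ⟨y, hyL, hyv, hyu⟩ := Stmt8Aux.sep hP hpres' hprim hirr' v u i hlt
      have h1 : y ∈ (fun y => y + (Fin.snoc v 0 : Fin (d + 1) → ℝ)) '' coneOver P ∩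
          latticePts (d + 1) := ⟨hyv, hyL⟩
      rw [← h] at h1
      exact hyu h1.1
  · intro hc
    have hc' : ∀ i, ⌈Stmt8Aux.F (a i) u⌉ = ⌈Stmt8Aux.F (a i) v⌉ := hc
    by_cases hu : ∀ j, ∃ n : ℤ, u j = (n : ℝ)
    · rw [Stmt8Aux.eq_of_int hP hpres' hu hc']
    · by_cases hv : ∀ j, ∃ n : ℤ, v j = (n : ℝ)
      · rw [Stmt8Aux.eq_of_int hP hpres' hv (fun i => (hc' i).symm)]
      · exact Set.Subset.antisymm
          (Stmt8Aux.subset_T hpres' hne u v hc' hu)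
          (Stmt8Aux.subset_T hpres' hne v u (fun i => (hc' i).symm) hv)
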